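/- Consider the incomplete pairwise comparison matrix on 5 alternatives whose comparison graph is the 5-cycle with edges {1,2},{2,3},{3,4},{4,5},{5,1} and whose values are 𝒜_12 = 2, 𝒜_23 = 3, 𝒜_34 = 2, 𝒜_45 = 5, 𝒜_51 = 7 (with reciprocal entries 𝒜_21 = 1/2, 𝒜_32 = 1/3, 𝒜_43 = 1/2, 𝒜_54 = 1/5, 𝒜_15 = 1/7, and all other comparisons missing). Then the maximum of σ over all feasible pairwise ordinal preference assignments equals ln 7 + ln 5 + ln 3 + ln 2 − ln 2 = ln 105, and this maximum is attained by at least two distinct feasible assignments: one in which x_21 = 1 (reversing the edge (1,2)) and one in which x_43 = 1 (reversing the edge (3,4)). In particular, Problem 1 for this instance (which has no ties, so τ ≡ 0) does not have a unique optimal solution. -/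

import Mathlib

noncomputable section

def Feasible {n : ℕ} (x : Fin n → Fin n → ℝ) : Prop :=
  (∀ i j : Fin n, i ≠ j → (x i j = 0 ∨ x i j = 1)) ∧
  (∀ i j : Fin n, i ≠ j → x i j + x j i ≤ 1) ∧
  (∀ i j k : Fin n, i ≠ j → j ≠ k → i ≠ k → x i k * x k j ≤ x i j)

def sig5 (x : Fin 5 → Fin 5 → ℝ) : ℝ :=
  Real.log 2 * (x 0 1 - x 1 0) + Real.log 3 * (x 1 2 - x 2 1) +
    Real.log 2 * (x 2 3 - x 3 2) + Real.log 5 * (x 3 4 - x 4 3) +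
    Real.log 7 * (x 4 0 - x 0 4)

def rk (r : Fin 5 → ℕ) (i j : Fin 5) : ℝ := if r i < r j then 1 else 0

lemma rk_feasible (r : Fin 5 → ℕ) : Feasible (rk r) := by
  refine ⟨?_, ?_, ?_⟩
  · intro i j _; unfold rk; split_ifs <;> simp
  · intro i j _; unfold rk; split_ifs <;> norm_num; omega
  · intro i j k _ _ _; unfold rk; split_ifs <;> norm_num; omega

lemma chain5 {x : Fin 5 → Fin 5 → ℝ} (hx : Feasible x) (a b c : Fin 5)
    (hab : a ≠ b) (hbc : b ≠ c) (hac : a ≠ c)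
    (h1 : x a b = 1) (h2 : x b c = 1) : x a c = 1 := by
  have ht := hx.2.2 a c b hac (Ne.symm hbc) hab
  rw [h1, h2] at ht
  rcases hx.1 a c hac with h0 | h0
  · rw [h0] at ht; norm_num at ht
  · exact h0

/-- **An ambiguous cycle with multiple optimal solutions.**
For the 5-cycle instance above (no ties, so `τ ≡ 0`), the maximum of `σ` over all
feasible pairwise ordinal preference assignments equals
`ln 7 + ln 5 + ln 3 + ln 2 − ln 2 = ln 105`, and it is attained by (at least) two
distinct feasible assignments: one with `x_21 = 1` (reversing the edge `(v_1,v_2)`)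
and one with `x_43 = 1` (reversing the edge `(v_3,v_4)`). In particular Problem 1
does not have a unique optimal solution for this instance. -/
theorem ambiguous_cycle_nonunique_optimum :
    (∀ x : Fin 5 → Fin 5 → ℝ, Feasible x →
      sig5 x ≤ Real.log 7 + Real.log 5 + Real.log 3 + Real.log 2 - Real.log 2) ∧
    Real.log 7 + Real.log 5 + Real.log 3 + Real.log 2 - Real.log 2
      = Real.log 105 ∧
    (∃ x y : Fin 5 → Fin 5 → ℝ, Feasible x ∧ Feasible y ∧
      sig5 x = Real.log 105 ∧ sig5 y = Real.log 105 ∧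
      x 1 0 = 1 ∧ y 3 2 = 1 ∧ ∃ i j : Fin 5, i ≠ j ∧ x i j ≠ y i j) := by
  have h753 : Real.log 105 = Real.log 7 + Real.log 5 + Real.log 3 := by
    rw [show (105 : ℝ) = 7 * (5 * 3) by norm_num,
      Real.log_mul (by norm_num) (by norm_num),
      Real.log_mul (by norm_num) (by norm_num)]
    ring
  have la : (0:ℝ) < Real.log 2 := Real.log_pos (by norm_num)
  have lab : Real.log 2 ≤ Real.log 3 := Real.log_le_log (by norm_num) (by norm_num)
  have lbc : Real.log 3 ≤ Real.log 5 := Real.log_le_log (by norm_num) (by norm_num)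
  have lcd : Real.log 5 ≤ Real.log 7 := Real.log_le_log (by norm_num) (by norm_num)
  refine ⟨?_, by rw [h753]; ring, ?_⟩
  · intro x hx
    obtain ⟨hbin, hsum, htr⟩ := hx
    have hb : ∀ i j : Fin 5, i ≠ j → 0 ≤ x i j ∧ x i j ≤ 1 := by
      intro i j h; rcases hbin i j h with h' | h' <;> rw [h'] <;> norm_num
    have b01 := hb 0 1 (by decide); have b10 := hb 1 0 (by decide)
    have b12 := hb 1 2 (by decide); have b21 := hb 2 1 (by decide)
    have b23 := hb 2 3 (by decide); have b32 := hb 3 2 (by decide)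
    have b34 := hb 3 4 (by decide); have b43 := hb 4 3 (by decide)
    have b40 := hb 4 0 (by decide); have b04 := hb 0 4 (by decide)
    have s1 := hsum 0 1 (by decide); have s2 := hsum 1 2 (by decide)
    have s3 := hsum 2 3 (by decide); have s4 := hsum 3 4 (by decide)
    have s5 := hsum 4 0 (by decide)
    have hx' : Feasible x := ⟨hbin, hsum, htr⟩
    have H1 : x 1 2 = 1 → x 2 3 = 1 → x 3 4 = 1 → x 4 0 = 1 → x 1 0 = 1 := by
      intro a1 a2 a3 a4
      have c1 := chain5 hx' 1 2 3 (by decide) (by decide) (by decide) a1 a2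
      have c2 := chain5 hx' 1 3 4 (by decide) (by decide) (by decide) c1 a3
      exact chain5 hx' 1 4 0 (by decide) (by decide) (by decide) c2 a4
    have H2 : x 2 3 = 1 → x 3 4 = 1 → x 4 0 = 1 → x 0 1 = 1 → x 2 1 = 1 := by
      intro a1 a2 a3 a4
      have c1 := chain5 hx' 2 3 4 (by decide) (by decide) (by decide) a1 a2
      have c2 := chain5 hx' 2 4 0 (by decide) (by decide) (by decide) c1 a3
      exact chain5 hx' 2 0 1 (by decide) (by decide) (by decide) c2 a4
    have H3 : x 3 4 = 1 → x 4 0 = 1 → x 0 1 = 1 → x 1 2 = 1 → x 3 2 = 1 := by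
      intro a1 a2 a3 a4
      have c1 := chain5 hx' 3 4 0 (by decide) (by decide) (by decide) a1 a2
      have c2 := chain5 hx' 3 0 1 (by decide) (by decide) (by decide) c1 a3
      exact chain5 hx' 3 1 2 (by decide) (by decide) (by decide) c2 a4
    have H4 : x 4 0 = 1 → x 0 1 = 1 → x 1 2 = 1 → x 2 3 = 1 → x 4 3 = 1 := by
      intro a1 a2 a3 a4
      have c1 := chain5 hx' 4 0 1 (by decide) (by decide) (by decide) a1 a2
      have c2 := chain5 hx' 4 1 2 (by decide) (by decide) (by decide) c1 a3
      exact chain5 hx' 4 2 3 (by decide) (by decide) (by decide) c2 a4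
    have H5 : x 0 1 = 1 → x 1 2 = 1 → x 2 3 = 1 → x 3 4 = 1 → x 0 4 = 1 := by
      intro a1 a2 a3 a4
      have c1 := chain5 hx' 0 1 2 (by decide) (by decide) (by decide) a1 a2
      have c2 := chain5 hx' 0 2 3 (by decide) (by decide) (by decide) c1 a3
      exact chain5 hx' 0 3 4 (by decide) (by decide) (by decide) c2 a4
    rcases hbin 0 1 (by decide) with h1 | h1 <;>
    rcases hbin 1 2 (by decide) with h2 | h2 <;>
    rcases hbin 2 3 (by decide) with h3 | h3 <;>
    rcases hbin 3 4 (by decide) with h4 | h4 <;>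
    rcases hbin 4 0 (by decide) with h5 | h5
    all_goals try have k1 := H1 h2 h3 h4 h5
    all_goals try have k2 := H2 h3 h4 h5 h1
    all_goals try have k3 := H3 h4 h5 h1 h2
    all_goals try have k4 := H4 h5 h1 h2 h3
    all_goals try have k5 := H5 h1 h2 h3 h4
    all_goals simp only [sig5, h1, h2, h3, h4, h5]
    all_goals try rw [k1]
    all_goals try rw [k2]
    all_goals try rw [k3]
    all_goals try rw [k4]
    all_goals try rw [k5]
    all_goals
      linarith [mul_nonneg la.le b10.1, mul_nonneg (la.le.trans lab) b21.1,
        mul_nonneg la.le b32.1,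
        mul_nonneg (by linarith : (0:ℝ) ≤ Real.log 5) b43.1,
        mul_nonneg (by linarith : (0:ℝ) ≤ Real.log 7) b04.1,
        mul_nonneg la.le b01.1, mul_nonneg (la.le.trans lab) b12.1,
        mul_nonneg la.le b23.1,
        mul_nonneg (by linarith : (0:ℝ) ≤ Real.log 5) b34.1,
        mul_nonneg (by linarith : (0:ℝ) ≤ Real.log 7) b40.1]
  · refine ⟨rk ![4,0,1,2,3], rk ![2,3,4,0,1], rk_feasible _, rk_feasible _, ?_, ?_, ?_, ?_,
      ⟨2, 3, by decide, ?_⟩⟩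
    · show _ = _
      simp only [sig5, rk, Matrix.cons_val]
      norm_num [h753]
      ring
    · simp only [sig5, rk, Matrix.cons_val]
      norm_num [h753]
      ring
    · simp only [rk, Matrix.cons_val]; norm_num
    · simp only [rk, Matrix.cons_val]; norm_num
    · simp only [rk, Matrix.cons_val]; norm_num
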